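/- In a unital Banach algebra, the identity element 1 cannot be expressed as a commutator: there do not exist elements D, X with DX - XD = 1. (Wintner–Wielandt theorem.) -/

import Mathlib

/-- Wintner–Wielandt theorem: in a unital Banach algebra the identity is not a commutator. -/
theorem wintner_wielandt {A : Type*} [NormedRing A] [NormedAlgebra ℂ A] [CompleteSpace A]
    [NormOneClass A] (D X : A) : D * X - X * D ≠ 1 := by
  intro h
  have key : ∀ n : ℕ, D * X ^ (n + 1) - X ^ (n + 1) * D = (n + 1) • X ^ n := by
    intro n
    induction n with
    | zero => simpa using h
    | succ n ih =>
      have e : D * X ^ (n + 2) - X ^ (n + 2) * D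
          = (D * X ^ (n + 1) - X ^ (n + 1) * D) * X + X ^ (n + 1) * (D * X - X * D) := by
        rw [pow_succ]; noncomm_ring
      rw [e, ih, h, smul_mul_assoc, ← pow_succ, mul_one, succ_nsmul, succ_nsmul, succ_nsmul]
  have hne : ∀ n : ℕ, X ^ n ≠ 0 := by
    intro n
    induction n with
    | zero =>
      intro h0
      have := congrArg norm h0
      simp at this
    | succ n ih =>
      intro h0
      have h1 := key n
      rw [h0, mul_zero, zero_mul, sub_zero] at h1
      have hc : ((n + 1 : ℕ) : ℂ) • X ^ n = 0 := by
        rw [Nat.cast_smul_eq_nsmul]; exact h1.symm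
      rcases smul_eq_zero.mp hc with h2 | h2
      · exact absurd (Nat.cast_eq_zero.mp h2) (by omega)
      · exact ih h2
  have bound : ∀ n : ℕ, (n + 1 : ℝ) ≤ 2 * ‖D‖ * ‖X‖ := by
    intro n
    have h1 : ((n + 1 : ℕ) : ℝ) * ‖X ^ n‖ = ‖(n + 1) • X ^ n‖ := by
      rw [← Nat.cast_smul_eq_nsmul ℂ, norm_smul, Complex.norm_natCast]
    have h2 : ‖(n + 1) • X ^ n‖ ≤ 2 * ‖D‖ * ‖X‖ * ‖X ^ n‖ := by
      rw [← key n]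
      calc ‖D * X ^ (n + 1) - X ^ (n + 1) * D‖
          ≤ ‖D * X ^ (n + 1)‖ + ‖X ^ (n + 1) * D‖ := norm_sub_le _ _
        _ ≤ ‖D‖ * ‖X ^ (n + 1)‖ + ‖X ^ (n + 1)‖ * ‖D‖ := by
            gcongr <;> exact norm_mul_le _ _
        _ ≤ ‖D‖ * (‖X‖ * ‖X ^ n‖) + ‖X‖ * ‖X ^ n‖ * ‖D‖ := by
            have : ‖X ^ (n + 1)‖ ≤ ‖X‖ * ‖X ^ n‖ := by
              rw [pow_succ']; exact norm_mul_le _ _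
            gcongr <;> positivity
        _ = 2 * ‖D‖ * ‖X‖ * ‖X ^ n‖ := by ring
    have hpos : 0 < ‖X ^ n‖ := norm_pos_iff.mpr (hne n)
    have h3 := h1 ▸ h2
    have h4 := (mul_le_mul_iff_of_pos_right hpos).mp h3
    push_cast at h4
    linarith
  obtain ⟨n, hn⟩ := exists_nat_gt (2 * ‖D‖ * ‖X‖)
  have := bound n
  push_cast at this
  linarith
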